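/- arXiv:2504.15399 — 2 statements merged into one kernel-verified Lean document; each statement's English description precedes it below -/
import Mathlib

section
/- Let n be a positive integer, let w be a vector in ℝ^n, let A be an n×n positive definite symmetric real matrix, and let α, β be integers. Then (wᵀ A^α w)² ≤ (wᵀ A^{α+β} w)·(wᵀ A^{α−β} w), where integer powers of A are defined via its invertibility (A^{-1} is the matrix inverse). -/
open Matrix

lemma dot_cs {n : ℕ} (u v : Fin n → ℝ) :
    (u ⬝ᵥ v) ^ 2 ≤ (u ⬝ᵥ u) * (v ⬝ᵥ v) := by
  have := Finset.sum_mul_sq_le_sq_mul_sq Finset.univ u v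
  simpa [dotProduct, sq, Finset.mul_sum, mul_comm, mul_left_comm] using this

lemma psd_cs {n : ℕ} (B : Matrix (Fin n) (Fin n) ℝ) (hB : B.PosSemidef)
    (x y : Fin n → ℝ) :
    (x ⬝ᵥ B.mulVec y) ^ 2 ≤ (x ⬝ᵥ B.mulVec x) * (y ⬝ᵥ B.mulVec y) := by
  open scoped MatrixOrder in
  set S := CFC.sqrt B with hS
  have hSsymm : Sᵀ = S := by
    have := (CFC.sqrt_nonneg (a := B)).posSemidef.isHermitian
    simpa [Matrix.IsHermitian] using this
  have key : ∀ a b : Fin n → ℝ, a ⬝ᵥ B.mulVec b = (S.mulVec a) ⬝ᵥ (S.mulVec b) := by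
    intro a b
    rw [← CFC.sqrt_mul_sqrt_self B hB.nonneg, ← hS, ← Matrix.mulVec_mulVec, Matrix.dotProduct_mulVec a S,
      ← Matrix.mulVec_transpose, hSsymm]
  rw [key, key, key]
  exact dot_cs _ _

/-- Lemma 1: for a positive definite symmetric real matrix `A`, a vector `w ∈ ℝⁿ`,
and integers `α, β`, we have `(wᵀ Aᵅ w)² ≤ (wᵀ A^{α+β} w) (wᵀ A^{α-β} w)`. -/
theorem stmt_0 (n : ℕ) (hn : 0 < n) (w : Fin n → ℝ)
    (A : Matrix (Fin n) (Fin n) ℝ) (hA : A.PosDef) (α β : ℤ) :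
    (w ⬝ᵥ (A ^ α).mulVec w) ^ 2 ≤
      (w ⬝ᵥ (A ^ (α + β)).mulVec w) * (w ⬝ᵥ (A ^ (α - β)).mulVec w) := by
  have hdet : IsUnit A.det := isUnit_iff_ne_zero.mpr hA.det_pos.ne'
  have hB : (A ^ (α - β)).PosSemidef := hA.posSemidef.zpow (α - β)
  have hsymm : ∀ γ : ℤ, (A ^ γ)ᵀ = A ^ γ := by
    intro γ
    have := (hA.isHermitian.zpow γ)
    simpa [Matrix.IsHermitian] using this
  have h1 : w ⬝ᵥ (A ^ α).mulVec w = w ⬝ᵥ (A ^ (α - β)).mulVec ((A ^ β).mulVec w) := by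
    rw [Matrix.mulVec_mulVec, ← Matrix.zpow_add hdet, sub_add_cancel]
  have h2 : ((A ^ β).mulVec w) ⬝ᵥ (A ^ (α - β)).mulVec ((A ^ β).mulVec w)
      = w ⬝ᵥ (A ^ (α + β)).mulVec w := by
    rw [Matrix.mulVec_mulVec, ← Matrix.zpow_add hdet, sub_add_cancel, ← hsymm β,
      Matrix.mulVec_transpose, ← Matrix.dotProduct_mulVec, Matrix.mulVec_mulVec,
      ← Matrix.zpow_add hdet, add_comm]
  rw [h1, ← h2]
  have := psd_cs (A ^ (α - β)) hB w ((A ^ β).mulVec w)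
  linarith [this]
end

section
/- Let n be a positive integer, let H be an n×n positive definite symmetric real matrix, and let g be a nonzero vector in ℝ^n. Define v₁ = −g, v₂ = −H^{-1} g, v_∥ = ((v₂·v₁)/‖v₁‖²) v₁, and v_⊥ = v₂ − v_∥. Then the inner product v_⊥ · (2 H g) is nonnegative: v_⊥ · (2Hg) ≥ 0. -/
open Matrix

lemma cs_psd {n : ℕ} {M : Matrix (Fin n) (Fin n) ℝ} (hM : M.PosSemidef)
    (x y : Fin n → ℝ) :
    (x ⬝ᵥ M.mulVec y) ^ 2 ≤ (x ⬝ᵥ M.mulVec x) * (y ⬝ᵥ M.mulVec y) := by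
  have hMt : Mᵀ = M := by have h := hM.1; simp at h; exact h.eq
  have hsym : ∀ u v : Fin n → ℝ, u ⬝ᵥ M.mulVec v = v ⬝ᵥ M.mulVec u := by
    intro u v
    rw [dotProduct_mulVec, ← mulVec_transpose, hMt, dotProduct_comm]
  have key : ∀ t : ℝ, 0 ≤ (y ⬝ᵥ M.mulVec y) * (t * t) + (2 * (x ⬝ᵥ M.mulVec y)) * t
      + (x ⬝ᵥ M.mulVec x) := by
    intro t
    have h := hM.dotProduct_mulVec_nonneg (x + t • y)
    simp only [star_trivial] at h
    have hq : (x + t • y) ⬝ᵥ M.mulVec (x + t • y)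
        = (y ⬝ᵥ M.mulVec y) * (t * t) + (2 * (x ⬝ᵥ M.mulVec y)) * t + (x ⬝ᵥ M.mulVec x) := by
      rw [mulVec_add, dotProduct_add, add_dotProduct, add_dotProduct, mulVec_smul,
        dotProduct_smul, smul_dotProduct, smul_dotProduct, dotProduct_smul]
      have h1 := hsym x y
      simp only [smul_eq_mul]
      linear_combination (-t) * h1
    linarith [hq ▸ h]
  have hd := discrim_le_zero key
  unfold discrim at hd
  nlinarith [hd]

/-- Proposition 1: for positive definite symmetric `H` and nonzero `g`, with
`v₁ = −g` (gradient descent direction), `v₂ = −H⁻¹ g` (Newton direction),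
`v∥ = ((v₂·v₁)/‖v₁‖²) v₁` the projection of `v₂` on `v₁`, and `v⊥ = v₂ − v∥`,
the inner product `v⊥ · (2Hg)` is nonnegative. -/
theorem stmt_2 (n : ℕ) (hn : 0 < n) (H : Matrix (Fin n) (Fin n) ℝ) (hH : H.PosDef)
    (g : Fin n → ℝ) (hg : g ≠ 0)
    (v₁ v₂ vpar vperp : Fin n → ℝ)
    (hv₁ : v₁ = -g)
    (hv₂ : v₂ = -(H⁻¹.mulVec g))
    (hpar : vpar = ((v₂ ⬝ᵥ v₁) / (v₁ ⬝ᵥ v₁)) • v₁)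
    (hperp : vperp = v₂ - vpar) :
    0 ≤ vperp ⬝ᵥ ((2 : ℝ) • H.mulVec g) := by
  subst hv₁ hv₂ hpar hperp
  have hdet : IsUnit H.det := isUnit_iff_ne_zero.2 hH.det_pos.ne'
  have hHinv : H.mulVec (H⁻¹.mulVec g) = g := by
    rw [mulVec_mulVec, mul_nonsing_inv H hdet, one_mulVec]
  have hHt : Hᵀ = H := by have h := hH.1; simp at h; exact h.eq
  have hsym : ∀ u v : Fin n → ℝ, u ⬝ᵥ H.mulVec v = v ⬝ᵥ H.mulVec u := by
    intro u v
    rw [dotProduct_mulVec, ← mulVec_transpose, hHt, dotProduct_comm]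
  set a : ℝ := g ⬝ᵥ g with ha
  set b : ℝ := g ⬝ᵥ H.mulVec g with hb
  set c : ℝ := g ⬝ᵥ H⁻¹.mulVec g with hc
  have hapos : 0 < a := by
    have := dotProduct_star_self_pos_iff (v := g) |>.2 hg
    simpa using this
  -- Cauchy-Schwarz: a² ≤ b * c
  have hcs : a ^ 2 ≤ b * c := by
    have := cs_psd hH.posSemidef g (H⁻¹.mulVec g)
    rw [hHinv] at this
    calc a ^ 2 ≤ b * ((H⁻¹.mulVec g) ⬝ᵥ g) := this
      _ = b * c := by rw [dotProduct_comm]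
  -- expand the goal
  have hexp : (-(H⁻¹.mulVec g) - ((-(H⁻¹.mulVec g) ⬝ᵥ -g) / (-g ⬝ᵥ -g)) • -g)
      ⬝ᵥ ((2 : ℝ) • H.mulVec g) = 2 * (-a + (c / a) * b) := by
    rw [sub_dotProduct, dotProduct_smul, dotProduct_smul, smul_dotProduct,
      neg_dotProduct, neg_dotProduct, neg_dotProduct, dotProduct_neg,
      dotProduct_neg, neg_neg, neg_neg]
    have h1 : (H⁻¹.mulVec g) ⬝ᵥ H.mulVec g = a := by
      rw [hsym, hHinv]
    have h2 : (H⁻¹.mulVec g) ⬝ᵥ g = c := dotProduct_comm _ _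
    rw [h1, h2]
    simp only [smul_eq_mul, neg_dotProduct, dotProduct_neg, neg_neg, ← ha, ← hb]
    ring
  rw [hexp]
  have key : a ≤ c / a * b := by
    rw [div_mul_eq_mul_div, le_div_iff₀ hapos]; nlinarith [hcs]
  linarith
end
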